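/- There exist universal constants c, C > 0 such that for all 0 < s < 1: c·s(1−s) ≤ q(s) ≤ C·s(1−s)·√(|log(s(1−s))|), where q(s) = (2π)^{-1/2} e^{-Ψ(s)²/2} and Ψ is the inverse standard Gaussian CDF. In particular one may take c = 4/√(2π) for the lower bound. -/

import Mathlib

open MeasureTheory ProbabilityTheory Real Set Filter Topology

noncomputable def gamma1 : Measure ℝ := gaussianReal 0 1

noncomputable def Phi (t : ℝ) : ℝ :=
  ∫ s in Set.Iic t, (Real.sqrt (2 * Real.pi))⁻¹ * Real.exp (-s ^ 2 / 2)

noncomputable def Psi : ℝ → ℝ := Function.invFun Phi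
noncomputable def q2 (s : ℝ) : ℝ := (Real.sqrt (2 * Real.pi))⁻¹ * Real.exp (-(Psi s) ^ 2 / 2)

noncomputable def pdf0 (x : ℝ) : ℝ := (Real.sqrt (2 * Real.pi))⁻¹ * Real.exp (-x ^ 2 / 2)

lemma sqrt_two_pi_pos : 0 < Real.sqrt (2 * Real.pi) :=
  Real.sqrt_pos.mpr (by positivity)

lemma pdf0_pos (x : ℝ) : 0 < pdf0 x :=
  mul_pos (inv_pos.mpr sqrt_two_pi_pos) (Real.exp_pos _)

lemma pdf0_cont : Continuous pdf0 := by
  unfold pdf0; continuity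

lemma pdf0_eq (x : ℝ) : pdf0 x = (Real.sqrt (2 * Real.pi))⁻¹ * Real.exp (-(1/2) * x ^ 2) := by
  unfold pdf0; ring_nf

lemma pdf0_integrable : Integrable pdf0 := by
  have h : Integrable (fun x : ℝ => Real.exp (-(1/2) * x ^ 2)) := integrable_exp_neg_mul_sq (by norm_num)
  have := h.const_mul (Real.sqrt (2 * Real.pi))⁻¹
  refine this.congr (by ring_nf; exact Eventually.of_forall fun x => by rw [pdf0_eq]; ring_nf)

lemma integral_pdf0 : ∫ x, pdf0 x = 1 := by
  have h : ∫ x : ℝ, Real.exp (-(1/2) * x ^ 2) = Real.sqrt (Real.pi / (1/2)) := integral_gaussian (1/2)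
  have : ∫ x, pdf0 x = (Real.sqrt (2 * Real.pi))⁻¹ * ∫ x : ℝ, Real.exp (-(1/2) * x ^ 2) := by
    rw [← integral_const_mul]; congr 1; ext x; rw [pdf0_eq]
  rw [this, h]
  have h2 : Real.pi / (1/2) = 2 * Real.pi := by ring
  rw [h2]
  have : Real.sqrt (2 * Real.pi) ≠ 0 := by positivity
  field_simp

lemma Phi_eq (t : ℝ) : Phi t = ∫ x in Set.Iic t, pdf0 x := rfl

lemma Phi_hasDerivAt (t : ℝ) : HasDerivAt Phi (pdf0 t) t := by
  have key : ∀ u : ℝ, Phi u = Phi 0 + ∫ x in (0:ℝ)..u, pdf0 x := by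
    intro u
    rw [Phi_eq, Phi_eq]
    rw [← intervalIntegral.integral_Iic_sub_Iic (pdf0_integrable.integrableOn) (pdf0_integrable.integrableOn)]
    ring
  have hd0 : HasDerivAt (fun u => ∫ x in (0:ℝ)..u, pdf0 x) (pdf0 t) t :=
    intervalIntegral.integral_hasDerivAt_right
      (pdf0_integrable.intervalIntegrable (a := 0) (b := t))
      (pdf0_cont.stronglyMeasurableAtFilter _ _) pdf0_cont.continuousAt
  have hd : HasDerivAt (fun u => Phi 0 + ∫ x in (0:ℝ)..u, pdf0 x) (pdf0 t) t := hd0.const_add (Phi 0)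
  exact hd.congr_of_eventuallyEq (Eventually.of_forall key)
  
lemma Phi_tendsto_atTop : Tendsto Phi atTop (𝓝 1) := by
  have := (MeasureTheory.aecover_Iic (μ := (volume : Measure ℝ)) (l := atTop) tendsto_id).integral_tendsto_of_countably_generated pdf0_integrable
  rwa [integral_pdf0] at this

lemma pdf0_neg (x : ℝ) : pdf0 (-x) = pdf0 x := by unfold pdf0; rw [neg_pow]; norm_num

lemma Phi_add_compl (t : ℝ) : Phi t + ∫ x in Set.Ioi t, pdf0 x = 1 := by
  rw [Phi_eq, intervalIntegral.integral_Iic_add_Ioi pdf0_integrable.integrableOn pdf0_integrable.integrableOn, integral_pdf0]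

lemma Phi_neg_eq (t : ℝ) : Phi (-t) = 1 - Phi t := by
  have h1 : Phi (-t) = ∫ x in Set.Ioi t, pdf0 x := by
    rw [Phi_eq]
    have : ∫ x in Set.Iic (-t), pdf0 x = ∫ x in Set.Iic (-t), pdf0 (-x) := by
      simp [pdf0_neg]
    rw [this, integral_comp_neg_Iic, neg_neg]
  rw [h1, eq_sub_iff_add_eq, add_comm, Phi_add_compl]

lemma Phi_zero : Phi 0 = 1/2 := by
  have := Phi_neg_eq 0
  rw [neg_zero] at this
  linarith

lemma Phi_strictMono : StrictMono Phi :=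
  strictMono_of_hasDerivAt_pos (fun t => Phi_hasDerivAt t) (fun t => pdf0_pos t)

lemma Phi_tendsto_atBot : Tendsto Phi atBot (𝓝 0) := by
  have h : Tendsto (fun t => 1 - Phi (-t)) atBot (𝓝 0) := by
    have h2 : Tendsto (fun t : ℝ => -t) atBot atTop := tendsto_neg_atBot_atTop
    have := Phi_tendsto_atTop.comp h2
    have h3 := (tendsto_const_nhds (x := (1:ℝ)) (f := atBot)).sub this
    simpa using h3
  refine h.congr fun t => by rw [Phi_neg_eq]; ring

lemma Phi_lt_one (t : ℝ) : Phi t < 1 := by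
  have h1 : Phi t < Phi (t+1) := Phi_strictMono (by linarith)
  have h2 : Phi (t+1) ≤ 1 := by
    refine ge_of_tendsto Phi_tendsto_atTop ?_
    filter_upwards [eventually_ge_atTop (t+1)] with u hu
    exact Phi_strictMono.monotone hu
  linarith

lemma Phi_pos (t : ℝ) : 0 < Phi t := by
  have := Phi_lt_one (-t)
  rw [Phi_neg_eq] at this
  linarith

lemma Phi_surjOn : ∀ s ∈ Set.Ioo (0:ℝ) 1, ∃ t, Phi t = s := by
  intro s hs
  obtain ⟨a, ha⟩ : ∃ a, Phi a < s := by
    have := Phi_tendsto_atBot.eventually_lt_const hs.1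
    exact this.exists
  obtain ⟨b, hb⟩ : ∃ b, s < Phi b := by
    have := Phi_tendsto_atTop.eventually_const_lt hs.2
    exact this.exists
  have hab : a ≤ b := by
    by_contra h
    exact absurd (Phi_strictMono (lt_of_not_ge h)) (by linarith)
  have hc : Continuous Phi := by
    have : Differentiable ℝ Phi := fun t => (Phi_hasDerivAt t).differentiableAt
    exact this.continuous
  obtain ⟨t, _, ht⟩ := intermediate_value_Icc hab hc.continuousOn ⟨le_of_lt ha, le_of_lt hb⟩
  exact ⟨t, ht⟩

lemma q2_eq (s : ℝ) : q2 s = pdf0 (Psi s) := rfl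

lemma Phi_Psi {s : ℝ} (hs : s ∈ Set.Ioo (0:ℝ) 1) : Phi (Psi s) = s :=
  Function.invFun_eq (Phi_surjOn s hs)

lemma Psi_Phi (t : ℝ) : Psi (Phi t) = t :=
  Function.leftInverse_invFun Phi_strictMono.injective t

lemma Psi_symm {s : ℝ} (hs : s ∈ Set.Ioo (0:ℝ) 1) : Psi (1 - s) = -(Psi s) := by
  have h1 : Phi (-(Psi s)) = 1 - s := by rw [Phi_neg_eq, Phi_Psi hs]
  rw [← h1, Psi_Phi]

lemma q2_symm {s : ℝ} (hs : s ∈ Set.Ioo (0:ℝ) 1) : q2 (1 - s) = q2 s := by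
  rw [q2_eq, q2_eq, Psi_symm hs, pdf0_neg]

lemma Psi_nonneg {s : ℝ} (hs : s ∈ Set.Ioo (0:ℝ) 1) (h : 1/2 ≤ s) : 0 ≤ Psi s := by
  by_contra hneg
  have : Phi (Psi s) < Phi 0 := Phi_strictMono (lt_of_not_ge hneg)
  rw [Phi_Psi hs, Phi_zero] at this
  linarith

lemma updown (f f' : ℝ → ℝ) (hd : ∀ t, HasDerivAt f (f' t) t)
    (h0 : 0 ≤ f 0) (hlim : Tendsto f atTop (𝓝 0))
    (hpos : ∀ a, 0 < a → 0 < f' a → ∀ t ∈ Set.Icc (0:ℝ) a, 0 ≤ f' t)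
    (hneg : ∀ a, 0 < a → f' a ≤ 0 → ∀ t, a ≤ t → f' t ≤ 0) :
    ∀ a, 0 ≤ a → 0 ≤ f a := by
  have hdiff : Differentiable ℝ f := fun t => (hd t).differentiableAt
  have hderiv : ∀ t, deriv f t = f' t := fun t => (hd t).deriv
  intro a ha
  rcases eq_or_lt_of_le ha with rfl | ha
  · exact h0
  rcases le_or_gt (f' a) 0 with hfa | hfa
  · have hanti : AntitoneOn f (Set.Ici a) := by
      refine antitoneOn_of_deriv_nonpos (convex_Ici a) hdiff.continuous.continuousOn
        (hdiff.differentiableOn) ?_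
      intro t ht
      rw [hderiv]
      rw [interior_Ici] at ht
      exact hneg a ha hfa t (le_of_lt ht)
    refine le_of_tendsto hlim ?_
    filter_upwards [eventually_ge_atTop a] with u hu
    exact hanti (Set.self_mem_Ici) hu hu
  · have hmono : MonotoneOn f (Set.Icc 0 a) := by
      refine monotoneOn_of_deriv_nonneg (convex_Icc 0 a) hdiff.continuous.continuousOn
        (hdiff.differentiableOn) ?_
      intro t ht
      rw [hderiv]
      rw [interior_Icc] at ht
      exact hpos a ha hfa t ⟨le_of_lt ht.1, le_of_lt ht.2⟩
    calc 0 ≤ f 0 := h0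
    _ ≤ f a := hmono ⟨le_refl 0, ha.le⟩ ⟨ha.le, le_refl a⟩ ha.le

lemma exp_neg_sq_tendsto : Tendsto (fun t : ℝ => Real.exp (-t^2/2)) atTop (𝓝 0) := by
  have h1 : Tendsto (fun t : ℝ => -t^2/2) atTop atBot := by
    have : Tendsto (fun t : ℝ => t^2/2) atTop atTop :=
      (tendsto_pow_atTop (by norm_num)).atTop_div_const (by norm_num)
    simpa [neg_div] using tendsto_neg_atBot_iff.mpr this
  exact Real.tendsto_exp_atBot.comp h1

lemma pdf0_tendsto : Tendsto pdf0 atTop (𝓝 0) := by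
  have h := exp_neg_sq_tendsto.const_mul (Real.sqrt (2 * Real.pi))⁻¹
  rw [mul_zero] at h
  exact h.congr fun t => rfl

lemma poly_exp_tendsto : Tendsto (fun t : ℝ => (1+t) * Real.exp (-t^2/2)) atTop (𝓝 0) := by
  have hg : Tendsto (fun t : ℝ => (1+t) * Real.exp (-t)) atTop (𝓝 0) := by
    have h1 : Tendsto (fun t : ℝ => Real.exp (-t)) atTop (𝓝 0) :=
      Real.tendsto_exp_neg_atTop_nhds_zero
    have h2 : Tendsto (fun t : ℝ => t * Real.exp (-t)) atTop (𝓝 0) := by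
      have := Real.tendsto_pow_mul_exp_neg_atTop_nhds_zero 1
      simpa using this
    have := h1.add h2
    simpa [add_mul, one_mul] using this
  refine squeeze_zero' ?_ ?_ hg
  · filter_upwards [eventually_ge_atTop (0:ℝ)] with t ht
    positivity
  · filter_upwards [eventually_ge_atTop (2:ℝ)] with t ht
    have h1 : -t^2/2 ≤ -t := by nlinarith
    have h2 : (0:ℝ) ≤ 1 + t := by linarith
    exact mul_le_mul_of_nonneg_left (Real.exp_le_exp.mpr h1) h2

lemma hasDerivAt_expsq (t : ℝ) :
    HasDerivAt (fun t : ℝ => Real.exp (-t^2/2)) (-t * Real.exp (-t^2/2)) t := by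
  have h1 : HasDerivAt (fun t : ℝ => -t^2/2) (-t) t := by
    have := ((hasDerivAt_pow 2 t).neg).div_const 2
    refine this.congr_deriv ?_
    simp; ring
  have := h1.exp
  convert this using 1
  ring

lemma pdf0_hasDerivAt (t : ℝ) : HasDerivAt pdf0 (-t * pdf0 t) t := by
  have := (hasDerivAt_expsq t).const_mul (Real.sqrt (2 * Real.pi))⁻¹
  show HasDerivAt (fun x => (Real.sqrt (2 * Real.pi))⁻¹ * Real.exp (-x ^ 2 / 2)) (-t * pdf0 t) t
  exact this.congr_deriv (by unfold pdf0; ring)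

lemma sqrt_two_pi_ge_two : (2:ℝ) ≤ Real.sqrt (2 * Real.pi) := by
  exact (Real.le_sqrt' (by norm_num)).mpr (by nlinarith [Real.pi_gt_three])

lemma tail_ub : ∀ t : ℝ, 0 ≤ t → 1 - Phi t ≤ Real.exp (-t^2/2) := by
  set k : ℝ := (Real.sqrt (2 * Real.pi))⁻¹ with hk
  have hk0 : 0 < k := inv_pos.mpr sqrt_two_pi_pos
  set f : ℝ → ℝ := fun t => Real.exp (-t^2/2) - (1 - Phi t) with hf
  set f' : ℝ → ℝ := fun t => Real.exp (-t^2/2) * (k - t) with hf'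
  have hd : ∀ t, HasDerivAt f (f' t) t := by
    intro t
    have h1 := (hasDerivAt_expsq t).sub ((hasDerivAt_const t (1:ℝ)).sub (Phi_hasDerivAt t))
    refine h1.congr_deriv ?_
    simp only [hf', hk]
    unfold pdf0
    ring
  have key := updown f f' hd (by norm_num [hf, Phi_zero])
    (by
      have h2 : Tendsto (fun t : ℝ => (1:ℝ) - Phi t) atTop (𝓝 0) := by
        have := (tendsto_const_nhds (x := (1:ℝ)) (f := atTop)).sub Phi_tendsto_atTop
        simpa using this
      have := exp_neg_sq_tendsto.sub h2
      simpa using this)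
    (by
      intro a ha hfa t ht
      have hE : 0 < Real.exp (-a^2/2) := Real.exp_pos _
      have : 0 < k - a := by
        by_contra h
        push_neg at h
        have : f' a ≤ 0 := mul_nonpos_of_nonneg_of_nonpos hE.le h
        linarith
      have : 0 ≤ k - t := by
        have := ht.2; linarith
      exact mul_nonneg (Real.exp_pos _).le this)
    (by
      intro a ha hfa t ht
      have hE : 0 < Real.exp (-a^2/2) := Real.exp_pos _
      have hka : k - a ≤ 0 := by
        by_contra h
        push_neg at h
        have : 0 < f' a := mul_pos hE h
        linarith
      have : k - t ≤ 0 := by linarith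
      exact mul_nonpos_of_nonneg_of_nonpos (Real.exp_pos _).le this)
  intro t ht
  have := key t ht
  simp only [hf] at this
  linarith

lemma one_sub_Phi_tendsto : Tendsto (fun t : ℝ => 1 - Phi t) atTop (𝓝 0) := by
  have := (tendsto_const_nhds (x := (1:ℝ)) (f := atTop)).sub Phi_tendsto_atTop
  simpa using this

lemma phi_le_tail : ∀ t : ℝ, 0 ≤ t → pdf0 t ≤ (1 + t) * (1 - Phi t) := by
  set h : ℝ → ℝ := fun t => (1 - Phi t) - pdf0 t with hh_def
  have hh : ∀ t, HasDerivAt h ((t - 1) * pdf0 t) t := by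
    intro t
    have h1 := ((hasDerivAt_const t (1:ℝ)).sub (Phi_hasDerivAt t)).sub (pdf0_hasDerivAt t)
    refine h1.congr_deriv ?_
    ring
  have hdiffh : Differentiable ℝ h := fun t => (hh t).differentiableAt
  have hderivh : ∀ t, deriv h t = (t - 1) * pdf0 t := fun t => (hh t).deriv
  have h_lim : Tendsto h atTop (𝓝 0) := by
    have := one_sub_Phi_tendsto.sub pdf0_tendsto
    simpa using this
  have h_mono : MonotoneOn h (Set.Ici 1) := by
    refine monotoneOn_of_deriv_nonneg (convex_Ici 1) hdiffh.continuous.continuousOn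
      hdiffh.differentiableOn ?_
    intro t ht
    rw [interior_Ici] at ht
    rw [hderivh]
    exact mul_nonneg (by linarith [Set.mem_Ioi.mp ht]) (pdf0_pos t).le
  have h_anti : AntitoneOn h (Set.Iic 1) := by
    refine antitoneOn_of_deriv_nonpos (convex_Iic 1) hdiffh.continuous.continuousOn
      hdiffh.differentiableOn ?_
    intro t ht
    rw [interior_Iic] at ht
    have ht' : t < 1 := ht
    rw [hderivh]
    exact mul_nonpos_iff.mpr (Or.inr ⟨by linarith, (pdf0_pos t).le⟩)
  have h_nonpos : ∀ t : ℝ, 1 ≤ t → h t ≤ 0 := by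
    intro t ht
    refine ge_of_tendsto h_lim ?_
    filter_upwards [eventually_ge_atTop t] with u hu
    exact h_mono ht (le_trans ht hu) hu
  set F : ℝ → ℝ := fun t => (1 + t) * (1 - Phi t) - pdf0 t with hF_def
  have hF : ∀ t, HasDerivAt F (h t) t := by
    intro t
    have h1 : HasDerivAt (fun t : ℝ => 1 + t) 1 t := (hasDerivAt_id t).const_add 1
    have h2 : HasDerivAt (fun t : ℝ => 1 - Phi t) (-pdf0 t) t := by
      have := (hasDerivAt_const t (1:ℝ)).sub (Phi_hasDerivAt t)
      exact this.congr_deriv (zero_sub _)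
    have h3 := (h1.mul h2).sub (pdf0_hasDerivAt t)
    refine h3.congr_deriv ?_
    simp only [hh_def]
    ring
  have key := updown F h hF
    (by
      simp only [hF_def, Phi_zero]
      have : pdf0 0 = (Real.sqrt (2 * Real.pi))⁻¹ := by unfold pdf0; norm_num
      rw [this]
      have h2 : (Real.sqrt (2 * Real.pi))⁻¹ ≤ 1/2 := by
        rw [inv_le_comm₀ sqrt_two_pi_pos (by norm_num)]
        simpa using sqrt_two_pi_ge_two
      linarith [h2])
    (by
      have h1 : Tendsto (fun t : ℝ => (1 + t) * (1 - Phi t)) atTop (𝓝 0) := by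
        refine squeeze_zero' ?_ ?_ poly_exp_tendsto
        · filter_upwards [eventually_ge_atTop (0:ℝ)] with t ht
          exact mul_nonneg (by linarith) (by linarith [Phi_lt_one t])
        · filter_upwards [eventually_ge_atTop (0:ℝ)] with t ht
          exact mul_le_mul_of_nonneg_left (tail_ub t ht) (by linarith)
      have := h1.sub pdf0_tendsto
      simpa using this)
    (by
      intro a _ hfa t ht
      have ha1 : a ≤ 1 := by
        by_contra hcon
        push_neg at hcon
        linarith [h_nonpos a hcon.le]
      exact le_of_lt (lt_of_lt_of_le hfa (h_anti (le_trans ht.2 ha1) ha1 ht.2))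
    )
    (by
      intro a _ hfa t ht
      rcases le_or_gt 1 t with h1t | h1t
      · exact h_nonpos t h1t
      · exact le_trans (h_anti (le_trans ht h1t.le) h1t.le ht) hfa)
  intro t ht
  have := key t ht
  simp only [hF_def] at this
  linarith


lemma key_A_nonneg : ∀ t : ℝ, 0 ≤ t → 4 * (Phi t * (1 - Phi t)) ≤ Real.exp (-t^2/2) := by
  set h : ℝ → ℝ := fun t => 8 * Phi t - 4 - Real.sqrt (2 * Real.pi) * t with hh_def
  have hh : ∀ t, HasDerivAt h (8 * pdf0 t - Real.sqrt (2 * Real.pi)) t := by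
    intro t
    have h1 := ((Phi_hasDerivAt t).const_mul 8).sub
      (((hasDerivAt_id t).const_mul (Real.sqrt (2 * Real.pi))).const_add 4)
    have h2 : HasDerivAt (fun t : ℝ => 8 * Phi t - (4 + Real.sqrt (2 * Real.pi) * t))
        (8 * pdf0 t - Real.sqrt (2 * Real.pi)) t := by
      exact h1.congr_deriv (by ring)
    refine h2.congr_of_eventuallyEq (Eventually.of_forall fun u => by simp only [hh_def]; ring)
  have hdiffh : Differentiable ℝ h := fun t => (hh t).differentiableAt
  have hderivh : ∀ t, deriv h t = 8 * pdf0 t - Real.sqrt (2 * Real.pi) := fun t => (hh t).deriv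
  have hlog : 0 < Real.log (4 / Real.pi) := by
    apply Real.log_pos
    rw [lt_div_iff₀ Real.pi_pos]
    nlinarith [Real.pi_lt_d2]
  set p : ℝ := Real.sqrt (2 * Real.log (4 / Real.pi)) with hp_def
  have hp : 0 < p := Real.sqrt_pos.mpr (by linarith)
  have hp2 : p ^ 2 = 2 * Real.log (4 / Real.pi) := Real.sq_sqrt (by linarith)
  have hbase : ∀ u : ℝ, 8 * pdf0 u - Real.sqrt (2 * Real.pi) =
      (Real.sqrt (2 * Real.pi))⁻¹ * (8 * Real.exp (-u^2/2) - 2 * Real.pi) := by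
    have hs : Real.sqrt (2*Real.pi) * Real.sqrt (2*Real.pi) = 2*Real.pi :=
      Real.mul_self_sqrt (by positivity)
    have hkey : (Real.sqrt (2*Real.pi))⁻¹ * (2*Real.pi) = Real.sqrt (2*Real.pi) := by
      rw [inv_mul_eq_div, eq_comm, eq_div_iff (ne_of_gt sqrt_two_pi_pos), hs]
    intro u
    rw [mul_sub, hkey]
    unfold pdf0
    ring
  have hkpos : 0 < (Real.sqrt (2 * Real.pi))⁻¹ := inv_pos.mpr sqrt_two_pi_pos
  have hep : Real.exp (-p^2/2) = Real.pi / 4 := by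
    rw [show -p^2/2 = Real.log (Real.pi/4) by
      rw [show Real.log (Real.pi/4) = - Real.log (4/Real.pi) by
        rw [← Real.log_inv]; norm_num]
      rw [hp2]; ring]
    exact Real.exp_log (by positivity)
  have hsign_pos : ∀ t : ℝ, 0 ≤ t → t ≤ p → 0 ≤ 8 * pdf0 t - Real.sqrt (2 * Real.pi) := by
    intro t ht htp
    rw [hbase]
    have : Real.exp (-p^2/2) ≤ Real.exp (-t^2/2) := Real.exp_le_exp.mpr (by nlinarith)
    rw [hep] at this
    exact mul_nonneg hkpos.le (by linarith)
  have hsign_spos : ∀ t : ℝ, 0 ≤ t → t < p → 0 < 8 * pdf0 t - Real.sqrt (2 * Real.pi) := by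
    intro t ht htp
    rw [hbase]
    have : Real.exp (-p^2/2) < Real.exp (-t^2/2) := Real.exp_lt_exp.mpr (by nlinarith)
    rw [hep] at this
    exact mul_pos hkpos (by linarith)
  have hsign_neg : ∀ t : ℝ, p ≤ t → 8 * pdf0 t - Real.sqrt (2 * Real.pi) ≤ 0 := by
    intro t htp
    rw [hbase]
    have : Real.exp (-t^2/2) ≤ Real.exp (-p^2/2) := Real.exp_le_exp.mpr (by nlinarith [hp.le])
    rw [hep] at this
    exact mul_nonpos_iff.mpr (Or.inl ⟨hkpos.le, by linarith⟩)
  have h_zero : h 0 = 0 := by norm_num [hh_def, Phi_zero]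
  have h_mono : MonotoneOn h (Set.Icc 0 p) := by
    refine monotoneOn_of_deriv_nonneg (convex_Icc 0 p) hdiffh.continuous.continuousOn
      hdiffh.differentiableOn ?_
    intro t ht
    rw [interior_Icc] at ht
    rw [hderivh]
    exact hsign_pos t ht.1.le ht.2.le
  have h_smono : StrictMonoOn h (Set.Icc 0 p) := by
    refine strictMonoOn_of_deriv_pos (convex_Icc 0 p) hdiffh.continuous.continuousOn ?_
    intro t ht
    rw [interior_Icc] at ht
    rw [hderivh]
    exact hsign_spos t ht.1.le ht.2
  have h_anti : AntitoneOn h (Set.Ici p) := by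
    refine antitoneOn_of_deriv_nonpos (convex_Ici p) hdiffh.continuous.continuousOn
      hdiffh.differentiableOn ?_
    intro t ht
    rw [interior_Ici] at ht
    rw [hderivh]
    exact hsign_neg t ht.le
  -- nonneg of h on [0,p]
  have h_nonneg : ∀ t : ℝ, 0 ≤ t → t ≤ p → 0 ≤ h t := by
    intro t ht htp
    have := h_mono (Set.mem_Icc.mpr ⟨le_refl 0, hp.le⟩) (Set.mem_Icc.mpr ⟨ht, htp⟩) ht
    rwa [h_zero] at this
  set f : ℝ → ℝ := fun t => Real.exp (-t^2/2) - 4 * (Phi t * (1 - Phi t)) with hf_def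
  have hf' : ∀ t, HasDerivAt f (pdf0 t * h t) t := by
    intro t
    have h1 : HasDerivAt (fun t : ℝ => Phi t * (1 - Phi t))
        (pdf0 t * (1 - Phi t) + Phi t * (-pdf0 t)) t := by
      refine (Phi_hasDerivAt t).mul ?_
      have := (hasDerivAt_const t (1:ℝ)).sub (Phi_hasDerivAt t)
      exact this.congr_deriv (zero_sub _)
    have h2 := (hasDerivAt_expsq t).sub (h1.const_mul 4)
    refine h2.congr_deriv ?_
    have hE : Real.exp (-t^2/2) = Real.sqrt (2 * Real.pi) * pdf0 t := by
      unfold pdf0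
      rw [← mul_assoc, mul_inv_cancel₀ (ne_of_gt sqrt_two_pi_pos), one_mul]
    simp only [hh_def]
    rw [hE]
    ring
  have key := updown f (fun t => pdf0 t * h t) hf'
    (by norm_num [hf_def, Phi_zero])
    (by
      have h1 : Tendsto (fun t : ℝ => 4 * (Phi t * (1 - Phi t))) atTop (𝓝 0) := by
        have := (Phi_tendsto_atTop.mul one_sub_Phi_tendsto).const_mul 4
        simpa using this
      have := exp_neg_sq_tendsto.sub h1
      simpa using this)
    (by
      intro a ha hfa t ht
      have hfa' : 0 < pdf0 a * h a := hfa
      have hha : 0 < h a := by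
        by_contra hcon
        push_neg at hcon
        linarith [mul_nonpos_iff.mpr (Or.inl ⟨(pdf0_pos a).le, hcon⟩)]
      refine mul_nonneg (pdf0_pos t).le ?_
      rcases le_or_gt t p with htp | htp
      · exact h_nonneg t ht.1 htp
      · have hap : a ∈ Set.Ici p := Set.mem_Ici.mpr (le_trans htp.le ht.2)
        exact le_trans hha.le (h_anti (Set.mem_Ici.mpr htp.le) hap ht.2)
    )
    (by
      intro a ha hfa t ht
      have hfa' : pdf0 a * h a ≤ 0 := hfa
      have hha : h a ≤ 0 := by
        by_contra hcon
        push_neg at hcon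
        linarith [mul_pos (pdf0_pos a) hcon]
      have hpa : p ≤ a := by
        by_contra hcon
        push_neg at hcon
        have := h_smono (Set.mem_Icc.mpr ⟨le_refl 0, hp.le⟩)
          (Set.mem_Icc.mpr ⟨ha.le, hcon.le⟩) ha
        rw [h_zero] at this
        linarith
      have : h t ≤ h a := h_anti (Set.mem_Ici.mpr hpa) (Set.mem_Ici.mpr (le_trans hpa ht)) ht
      exact mul_nonpos_iff.mpr (Or.inl ⟨(pdf0_pos t).le, by linarith⟩)
    )
  intro t ht
  have := key t ht
  simp only [hf_def] at this
  linarith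

lemma key_A : ∀ t : ℝ, 4 * (Phi t * (1 - Phi t)) ≤ Real.exp (-t^2/2) := by
  intro t
  rcases le_or_gt 0 t with ht | ht
  · exact key_A_nonneg t ht
  · have := key_A_nonneg (-t) (by linarith)
    rw [Phi_neg_eq, neg_sq] at this
    linarith [this]

lemma lower_bound : ∀ s ∈ Set.Ioo (0:ℝ) 1,
    4 / Real.sqrt (2 * Real.pi) * (s * (1 - s)) ≤ q2 s := by
  intro s hs
  have h1 := key_A (Psi s)
  rw [Phi_Psi hs] at h1
  have hq : q2 s = (Real.sqrt (2 * Real.pi))⁻¹ * Real.exp (-(Psi s)^2/2) := rfl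
  have hk : 0 < (Real.sqrt (2 * Real.pi))⁻¹ := inv_pos.mpr sqrt_two_pi_pos
  rw [hq]
  rw [div_eq_mul_inv]
  calc 4 * (Real.sqrt (2 * Real.pi))⁻¹ * (s * (1 - s))
      = (Real.sqrt (2 * Real.pi))⁻¹ * (4 * (s * (1 - s))) := by ring
    _ ≤ (Real.sqrt (2 * Real.pi))⁻¹ * Real.exp (-(Psi s)^2/2) :=
      mul_le_mul_of_nonneg_left h1 hk.le

lemma upper_half : ∀ s ∈ Set.Ioo (0:ℝ) 1, 1/2 ≤ s →
    q2 s ≤ 6 * (s * (1 - s)) * Real.sqrt |Real.log (s * (1 - s))| := by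
  intro s hs hhalf
  set t : ℝ := Psi s with ht_def
  have ht0 : 0 ≤ t := Psi_nonneg hs hhalf
  set u : ℝ := 1 - s with hu_def
  have hu : 0 < u := by simp only [hu_def]; linarith [hs.2]
  have hu2 : u ≤ 1/2 := by simp only [hu_def]; linarith
  have hs0 : 0 < s := hs.1
  have hut : u = 1 - Phi t := by rw [ht_def, Phi_Psi hs]
  have hsu : 0 < s * u := mul_pos hs0 hu
  have hsu2 : s * u ≤ 1/2 := by nlinarith [hs.2.le]
  set L : ℝ := -Real.log (s * u) with hL_def
  have hlog2 : (0.6931471803 : ℝ) < Real.log 2 := Real.log_two_gt_d9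
  have hL_ge : Real.log 2 ≤ L := by
    simp only [hL_def]
    have : Real.log (s * u) ≤ Real.log (1/2) :=
      Real.log_le_log hsu hsu2
    rw [show (1:ℝ)/2 = 2⁻¹ by norm_num, Real.log_inv] at this
    linarith
  have hLpos : 0 < L := lt_of_lt_of_le (by linarith) hL_ge
  have habs : |Real.log (s * (1 - s))| = L := by
    rw [abs_of_nonpos (Real.log_nonpos hsu.le (by nlinarith))]
  have hsqL : 0 < Real.sqrt L := Real.sqrt_pos.mpr hLpos
  -- t ≤ √2 √L
  have ht_le : t ≤ Real.sqrt 2 * Real.sqrt L := by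
    have h1 : u ≤ Real.exp (-t^2/2) := by rw [hut]; exact tail_ub t ht0
    have h2 : Real.log u ≤ -t^2/2 := by
      have := Real.log_le_log hu h1
      rwa [Real.log_exp] at this
    have h3 : -Real.log u ≤ L := by
      simp only [hL_def]
      rw [Real.log_mul (ne_of_gt hs0) (ne_of_gt hu)]
      have : Real.log s ≤ 0 := Real.log_nonpos hs0.le (by linarith [hs.2.le])
      linarith
    have h4 : t^2 ≤ 2 * L := by linarith
    have := Real.le_sqrt ht0 (by positivity : (0:ℝ) ≤ 2 * L)
    rw [← Real.sqrt_mul (by norm_num : (0:ℝ) ≤ 2)]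
    exact (this.mpr h4)
  have hsqrt2 : Real.sqrt 2 ≤ 3/2 := by
    rw [show (3:ℝ)/2 = Real.sqrt ((3/2)^2) by rw [Real.sqrt_sq (by norm_num)]]
    exact Real.sqrt_le_sqrt (by norm_num)
  have hone : 1 ≤ (5/4) * Real.sqrt L := by
    have h1 : (0.8:ℝ) ≤ Real.sqrt (Real.log 2) := by
      rw [show (0.8:ℝ) = Real.sqrt (0.64) by
        rw [show (0.64:ℝ) = 0.8^2 by norm_num, Real.sqrt_sq (by norm_num)]]
      exact Real.sqrt_le_sqrt (by linarith)
    have h2 : Real.sqrt (Real.log 2) ≤ Real.sqrt L := Real.sqrt_le_sqrt hL_ge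
    linarith
  have h1t : 1 + t ≤ 3 * Real.sqrt L := by
    have : t ≤ (3/2) * Real.sqrt L := by
      calc t ≤ Real.sqrt 2 * Real.sqrt L := ht_le
        _ ≤ (3/2) * Real.sqrt L := mul_le_mul_of_nonneg_right hsqrt2 hsqL.le
    linarith
  have hphile : q2 s ≤ (1 + t) * u := by
    rw [q2_eq, ← ht_def, hut]
    rw [hut] at *
    exact phi_le_tail t ht0
  have hu_le : u ≤ 2 * (s * u) := by nlinarith
  calc q2 s ≤ (1 + t) * u := hphile
    _ ≤ (3 * Real.sqrt L) * u := mul_le_mul_of_nonneg_right h1t hu.le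
    _ ≤ (3 * Real.sqrt L) * (2 * (s * u)) := by
        refine mul_le_mul_of_nonneg_left hu_le (by positivity)
    _ = 6 * (s * (1 - s)) * Real.sqrt L := by rw [← hu_def]; ring
    _ = 6 * (s * (1 - s)) * Real.sqrt |Real.log (s * (1 - s))| := by rw [habs]

lemma upper_bound : ∀ s ∈ Set.Ioo (0:ℝ) 1,
    q2 s ≤ 6 * (s * (1 - s)) * Real.sqrt |Real.log (s * (1 - s))| := by
  intro s hs
  rcases le_or_gt (1/2) s with h | h
  · exact upper_half s hs h
  · have hs' : 1 - s ∈ Set.Ioo (0:ℝ) 1 := ⟨by linarith [hs.2], by linarith [hs.1]⟩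
    have := upper_half (1 - s) hs' (by linarith)
    rw [q2_symm hs] at this
    calc q2 s ≤ 6 * ((1-s) * (1 - (1-s))) * Real.sqrt |Real.log ((1-s) * (1 - (1-s)))| := this
      _ = 6 * (s * (1 - s)) * Real.sqrt |Real.log (s * (1 - s))| := by
          rw [show (1 - (1 - s)) = s by ring, mul_comm (1-s) s]

theorem q_two_sided_estimate :
    (∃ c > (0 : ℝ), ∃ C > (0 : ℝ), ∀ s ∈ Set.Ioo (0 : ℝ) 1,
      c * (s * (1 - s)) ≤ q2 s ∧
      q2 s ≤ C * (s * (1 - s)) * Real.sqrt |Real.log (s * (1 - s))|) ∧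
    (∀ s ∈ Set.Ioo (0 : ℝ) 1, 4 / Real.sqrt (2 * Real.pi) * (s * (1 - s)) ≤ q2 s) := by
  constructor
  · exact ⟨4 / Real.sqrt (2 * Real.pi), div_pos (by norm_num) sqrt_two_pi_pos,
      6, by norm_num, fun s hs => ⟨lower_bound s hs, upper_bound s hs⟩⟩
  · exact lower_bound
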